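/- For each 1 ≤ p ≤ ∞, h^p ⊊ h^{HK}: every function u harmonic in the open unit disc D with sup_{0≤r<1} ‖u_r‖_p < ∞ satisfies sup_{0≤r<1} ‖u_r‖ < ∞, and there exists a function u harmonic in D with sup_{0≤r<1} ‖u_r‖ < ∞ but sup_{0≤r<1} ‖u_r‖_1 = ∞ (hence u ∈ h^{HK} but u ∉ h^p for any 1 ≤ p ≤ ∞). -/

import Mathlib

open Real Filter MeasureTheory Set Topology

noncomputable section

/-- `f` has Henstock–Kurzweil integral `I` on `[a,b]`: for every `ε > 0` there is a
gauge `δ` such that every `δ`-fine tagged partition of `[a,b]` has Riemann sum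
within `ε` of `I`. -/
def HKIntegralEq (f : ℝ → ℝ) (a b I : ℝ) : Prop :=
  ∀ ε > 0, ∃ δ : ℝ → ℝ, (∀ x, 0 < δ x) ∧
    ∀ (n : ℕ) (t ξ : ℕ → ℝ),
      t 0 = a → t n = b →
      (∀ i < n, t i ≤ t (i + 1)) →
      (∀ i < n, t i ≤ ξ i ∧ ξ i ≤ t (i + 1)) →
      (∀ i < n, ξ i - δ (ξ i) < t i ∧ t (i + 1) < ξ i + δ (ξ i)) →
      |(∑ i ∈ Finset.range n, f (ξ i) * (t (i + 1) - t i)) - I| < ε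

/-- `f` is Henstock–Kurzweil integrable on `[a,b]`. -/
def HKIntegrable (f : ℝ → ℝ) (a b : ℝ) : Prop := ∃ I, HKIntegralEq f a b I

open Classical in
/-- The Henstock–Kurzweil integral of `f` on `[a,b]` (junk value `0` if not integrable). -/
def hkIntegral (f : ℝ → ℝ) (a b : ℝ) : ℝ :=
  if h : HKIntegrable f a b then h.choose else 0

/-- The Poisson kernel for the unit disc. -/
def poissonKernelDisc (r θ : ℝ) : ℝ :=
  (1 - r ^ 2) / (2 * π * (1 - 2 * r * Real.cos θ + r ^ 2))

/-- The Poisson integral of `f`, evaluated at the point `r e^{iθ}` of the unit disc. -/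
def poissonIntegral (f : ℝ → ℝ) (r θ : ℝ) : ℝ :=
  hkIntegral (fun φ => f φ * poissonKernelDisc r (φ - θ)) (-π) π

/-- The Alexiewicz norm over the circle: the supremum of `|∫_I g|` over intervals `I`
of length at most `2π`. -/
def alexNorm (g : ℝ → ℝ) : ℝ :=
  sSup {v | ∃ a b : ℝ, a ≤ b ∧ b - a ≤ 2 * π ∧ v = |hkIntegral g a b|}

/-- The `L^p` norm on `[-π,π]`. -/
def lpNorm (p : ℝ) (g : ℝ → ℝ) : ℝ :=
  (∫ θ in (-π)..π, |g θ| ^ p) ^ (1 / p)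

/-- `u` is harmonic on the open unit disc: it is `C²` there and satisfies
Laplace's equation `u_xx + u_yy = 0`. -/
def HarmonicOnDisc (u : ℂ → ℝ) : Prop :=
  ContDiffOn ℝ 2 u (Metric.ball 0 1) ∧
  ∀ z ∈ Metric.ball (0 : ℂ) 1,
    fderiv ℝ (fun w => fderiv ℝ u w 1) z 1
      + fderiv ℝ (fun w => fderiv ℝ u w Complex.I) z Complex.I = 0

/-- The restriction of `u : ℂ → ℝ` to the circle of radius `r`: `θ ↦ u (r e^{iθ})`. -/
def circleFn (u : ℂ → ℝ) (r θ : ℝ) : ℝ := u ((r : ℂ) * Complex.exp (θ * Complex.I))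

/-- Cousin's lemma: every gauge admits a fine tagged partition. -/
lemma cousin (δ : ℝ → ℝ) (hδ : ∀ x, 0 < δ x) {a b : ℝ} (hab : a ≤ b) :
    ∃ (n : ℕ) (t ξ : ℕ → ℝ), t 0 = a ∧ t n = b ∧
      (∀ i < n, t i ≤ t (i + 1)) ∧
      (∀ i < n, t i ≤ ξ i ∧ ξ i ≤ t (i + 1)) ∧
      (∀ i < n, ξ i - δ (ξ i) < t i ∧ t (i + 1) < ξ i + δ (ξ i)) := by
  set P : ℝ → Prop := fun x => ∃ (n : ℕ) (t ξ : ℕ → ℝ), t 0 = a ∧ t n = x ∧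
      (∀ i < n, t i ≤ t (i + 1)) ∧
      (∀ i < n, t i ≤ ξ i ∧ ξ i ≤ t (i + 1)) ∧
      (∀ i < n, ξ i - δ (ξ i) < t i ∧ t (i + 1) < ξ i + δ (ξ i)) with hP
  have hPa : P a := ⟨0, (fun _ => a), (fun _ => a), rfl, rfl,
    fun i hi => absurd hi (Nat.not_lt_zero i),
    fun i hi => absurd hi (Nat.not_lt_zero i),
    fun i hi => absurd hi (Nat.not_lt_zero i)⟩
  -- extension step
  have hext : ∀ x y c : ℝ, P x → x ≤ c → c ≤ y → c - δ c < x → y < c + δ c → P y := by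
    rintro x y c ⟨n, t, ξ, h0, hn, hmono, htag, hfine⟩ hxc hcy hfx hfy
    refine ⟨n + 1, (fun i => if i ≤ n then t i else y), (fun i => if i < n then ξ i else c),
      ?_, ?_, ?_, ?_, ?_⟩
    · simpa using h0
    · simp [Nat.not_succ_le_self n]
    · intro i hi
      rcases Nat.lt_or_ge i n with h | h
      · simp only [if_pos (le_of_lt h), if_pos (Nat.succ_le_of_lt h)]
        exact hmono i h
      · have hin : i = n := le_antisymm (Nat.lt_succ_iff.mp hi) h
        subst hin
        simp only [le_refl, if_pos, if_neg (Nat.not_succ_le_self i)]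
        rw [hn]; exact le_trans hxc hcy
    · intro i hi
      rcases Nat.lt_or_ge i n with h | h
      · simp only [if_pos (le_of_lt h), if_pos (Nat.succ_le_of_lt h), if_pos h]
        exact htag i h
      · have hin : i = n := le_antisymm (Nat.lt_succ_iff.mp hi) h
        subst hin
        simp only [le_refl, if_pos, if_neg (Nat.not_succ_le_self i), if_neg (lt_irrefl i)]
        rw [hn]; exact ⟨hxc, hcy⟩
    · intro i hi
      rcases Nat.lt_or_ge i n with h | h
      · simp only [if_pos (le_of_lt h), if_pos (Nat.succ_le_of_lt h), if_pos h]
        exact hfine i h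
      · have hin : i = n := le_antisymm (Nat.lt_succ_iff.mp hi) h
        subst hin
        simp only [le_refl, if_pos, if_neg (Nat.not_succ_le_self i), if_neg (lt_irrefl i)]
        rw [hn]; exact ⟨hfx, hfy⟩
  set S : Set ℝ := {x | a ≤ x ∧ x ≤ b ∧ P x} with hS
  have hSne : S.Nonempty := ⟨a, le_refl a, hab, hPa⟩
  have hSbdd : BddAbove S := ⟨b, fun x hx => hx.2.1⟩
  set c := sSup S with hc
  have hac : a ≤ c := le_csSup hSbdd ⟨le_refl a, hab, hPa⟩
  have hcb : c ≤ b := csSup_le hSne (fun x hx => hx.2.1)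
  -- find x ∈ S with c - δ c < x
  obtain ⟨x, hxS, hxgt⟩ : ∃ x ∈ S, c - δ c < x := by
    exact exists_lt_of_lt_csSup hSne (by linarith [hδ c] : c - δ c < sSup S)
  have hxc : x ≤ c := le_csSup hSbdd hxS
  have hPc : P c := hext x c c hxS.2.2 hxc (le_refl c) hxgt (by linarith [hδ c])
  rcases eq_or_lt_of_le hcb with h | h
  · exact h ▸ hPc
  · exfalso
    set y := min b (c + δ c / 2) with hy
    have hyc : c < y := lt_min h (by linarith [hδ c])
    have hyS : y ∈ S := ⟨le_trans hac (le_of_lt hyc), min_le_left _ _,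
      hext x y c hxS.2.2 hxc (le_of_lt hyc) hxgt
        (lt_of_le_of_lt (min_le_right _ _) (by linarith [hδ c]))⟩
    exact absurd (le_csSup hSbdd hyS) (not_le.mpr hyc)

lemma HKIntegralEq.unique {f : ℝ → ℝ} {a b I J : ℝ} (hab : a ≤ b)
    (hI : HKIntegralEq f a b I) (hJ : HKIntegralEq f a b J) : I = J := by
  by_contra hne
  have hpos : 0 < |I - J| / 2 := by
    have : I - J ≠ 0 := sub_ne_zero.mpr hne
    positivity
  obtain ⟨δ₁, hδ₁, h1⟩ := hI _ hpos
  obtain ⟨δ₂, hδ₂, h2⟩ := hJ _ hpos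
  obtain ⟨n, t, ξ, ht0, htn, hmono, htag, hfine⟩ :=
    cousin (fun x => min (δ₁ x) (δ₂ x)) (fun x => lt_min (hδ₁ x) (hδ₂ x)) hab
  have e1 := h1 n t ξ ht0 htn hmono htag
    (fun i hi => ⟨lt_of_le_of_lt (by linarith [min_le_left (δ₁ (ξ i)) (δ₂ (ξ i))]) (hfine i hi).1,
                  lt_of_lt_of_le (hfine i hi).2 (by linarith [min_le_left (δ₁ (ξ i)) (δ₂ (ξ i))])⟩)
  have e2 := h2 n t ξ ht0 htn hmono htag
    (fun i hi => ⟨lt_of_le_of_lt (by linarith [min_le_right (δ₁ (ξ i)) (δ₂ (ξ i))]) (hfine i hi).1,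
                  lt_of_lt_of_le (hfine i hi).2 (by linarith [min_le_right (δ₁ (ξ i)) (δ₂ (ξ i))])⟩)
  set s := ∑ i ∈ Finset.range n, f (ξ i) * (t (i + 1) - t i)
  have : |I - J| < |I - J| := by
    calc |I - J| = |(s - J) - (s - I)| := by ring_nf
    _ ≤ |s - J| + |s - I| := abs_sub _ _
    _ < |I - J| / 2 + |I - J| / 2 := add_lt_add e2 e1
    _ = |I - J| := by ring
  exact absurd this (lt_irrefl _)

lemma sum_integral_adjacent {f : ℝ → ℝ} (hf : Continuous f) (t : ℕ → ℝ) (n : ℕ) :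
    ∫ x in (t 0)..(t n), f x = ∑ i ∈ Finset.range n, ∫ x in (t i)..(t (i+1)), f x := by
  induction n with
  | zero => simp
  | succ n ih =>
      rw [Finset.sum_range_succ, ← ih,
        intervalIntegral.integral_add_adjacent_intervals
          (hf.intervalIntegrable _ _) (hf.intervalIntegrable _ _)]

lemma hkIntegralEq_of_continuous {f : ℝ → ℝ} (hf : Continuous f) {a b : ℝ} (hab : a ≤ b) :
    HKIntegralEq f a b (∫ x in a..b, f x) := by
  intro ε hε
  set ε' := ε / (b - a + 1) with hε'
  have hε'pos : 0 < ε' := by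
    apply div_pos hε; linarith
  -- uniform continuity on [a,b]
  have hcomp : IsCompact (Set.Icc a b) := isCompact_Icc
  have huc : UniformContinuousOn f (Set.Icc a b) :=
    hcomp.uniformContinuousOn_of_continuous hf.continuousOn
  rw [Metric.uniformContinuousOn_iff] at huc
  obtain ⟨δ₀, hδ₀, hδ₀f⟩ := huc ε' hε'pos
  refine ⟨fun _ => δ₀ / 2, fun _ => by linarith, ?_⟩
  intro n t ξ ht0 htn hmono htag hfine
  -- all points in [a,b]
  have hmono' : ∀ i j, i ≤ j → j ≤ n → t i ≤ t j := by
    intro i j hij hjn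
    induction j with
    | zero =>
        have : i = 0 := Nat.le_zero.mp hij
        subst this; exact le_refl _
    | succ j ih =>
        rcases Nat.lt_or_ge i (j+1) with h | h
        · exact le_trans (ih (by omega) (by omega)) (hmono j (by omega))
        · have : i = j + 1 := by omega
          subst this; rfl
  have hmem : ∀ i, i ≤ n → t i ∈ Set.Icc a b := by
    intro i hi
    exact ⟨ht0 ▸ hmono' 0 i (Nat.zero_le i) hi, htn ▸ hmono' i n hi (le_refl n)⟩
  have key : ∀ i < n, |f (ξ i) * (t (i+1) - t i) - ∫ x in (t i)..(t (i+1)), f x|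
      ≤ ε' * (t (i+1) - t i) := by
    intro i hi
    have h1 : f (ξ i) * (t (i+1) - t i) - (∫ x in (t i)..(t (i+1)), f x)
        = ∫ x in (t i)..(t (i+1)), (f (ξ i) - f x) := by
      rw [intervalIntegral.integral_sub (intervalIntegrable_const) (hf.intervalIntegrable _ _)]
      simp [intervalIntegral.integral_const, mul_comm]
    rw [h1]
    have hsub : Set.uIoc (t i) (t (i+1)) ⊆ Set.Icc a b := by
      rw [Set.uIoc_of_le (hmono i hi)]
      intro x hx
      exact ⟨le_trans (hmem i (le_of_lt hi)).1 (le_of_lt hx.1),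
        le_trans hx.2 (hmem (i+1) hi).2⟩
    have hbd : ∀ x ∈ Set.uIoc (t i) (t (i+1)), ‖f (ξ i) - f x‖ ≤ ε' := by
      intro x hx
      have hx' := hsub hx
      have hxi : ξ i ∈ Set.Icc a b := ⟨le_trans (hmem i (le_of_lt hi)).1 (htag i hi).1,
        le_trans (htag i hi).2 (hmem (i+1) hi).2⟩
      have hdist : dist (ξ i) x < δ₀ := by
        rw [Real.dist_eq, abs_sub_lt_iff]
        rw [Set.uIoc_of_le (hmono i hi)] at hx
        constructor
        · have := (hfine i hi).1; have := hx.1; have := (htag i hi).2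
          have := (hfine i hi).2; linarith
        · have := (hfine i hi).2; have := hx.2; have := (htag i hi).1
          have := (hfine i hi).1; linarith
      exact le_of_lt (hδ₀f (ξ i) hxi x hx' hdist)
    calc |∫ x in (t i)..(t (i+1)), (f (ξ i) - f x)| ≤ ε' * |t (i+1) - t i| :=
          intervalIntegral.norm_integral_le_of_norm_le_const hbd
      _ = ε' * (t (i+1) - t i) := by rw [abs_of_nonneg (by linarith [hmono i hi])]
  calc |(∑ i ∈ Finset.range n, f (ξ i) * (t (i + 1) - t i)) - ∫ x in a..b, f x|
      = |∑ i ∈ Finset.range n, (f (ξ i) * (t (i + 1) - t i) - ∫ x in (t i)..(t (i+1)), f x)| := by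
        rw [Finset.sum_sub_distrib, ← sum_integral_adjacent hf t n, ht0, htn]
    _ ≤ ∑ i ∈ Finset.range n, |f (ξ i) * (t (i + 1) - t i) - ∫ x in (t i)..(t (i+1)), f x| :=
        Finset.abs_sum_le_sum_abs _ _
    _ ≤ ∑ i ∈ Finset.range n, ε' * (t (i+1) - t i) :=
        Finset.sum_le_sum (fun i hi => key i (Finset.mem_range.mp hi))
    _ = ε' * (b - a) := by
        rw [← Finset.mul_sum, Finset.sum_range_sub t n, ht0, htn]
    _ < ε := by
        rw [hε', div_mul_eq_mul_div, div_lt_iff₀ (by linarith : (0:ℝ) < b - a + 1)]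
        nlinarith

lemma hkIntegral_of_continuous {f : ℝ → ℝ} (hf : Continuous f) {a b : ℝ} (hab : a ≤ b) :
    hkIntegral f a b = ∫ x in a..b, f x := by
  have h1 := hkIntegralEq_of_continuous hf hab
  have h : HKIntegrable f a b := ⟨_, h1⟩
  rw [hkIntegral, dif_pos h]
  exact HKIntegralEq.unique hab h.choose_spec h1





lemma alexNorm_le {g : ℝ → ℝ} (hg : Continuous g) {M : ℝ} (hM : 0 ≤ M)
    (h : ∀ a b : ℝ, a ≤ b → b - a ≤ 2 * π → |∫ x in a..b, g x| ≤ M) :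
    alexNorm g ≤ M := by
  apply Real.sSup_le _ hM
  rintro v ⟨a, b, hab, hlen, rfl⟩
  rw [hkIntegral_of_continuous hg hab]
  exact h a b hab hlen

lemma continuous_circleFn {u : ℂ → ℝ} (hu : ContinuousOn u (Metric.ball 0 1))
    {r : ℝ} (hr : r ∈ Set.Ico (0:ℝ) 1) : Continuous (circleFn u r) := by
  apply hu.comp_continuous
  · exact (Complex.continuous_ofReal.comp continuous_const).mul
      (Complex.continuous_exp.comp ((Complex.continuous_ofReal).mul continuous_const))
  · intro θ
    simp only [Metric.mem_ball, dist_zero_right, norm_mul, Complex.norm_real]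
    rw [Complex.norm_exp]
    simp only [Complex.mul_re, Complex.ofReal_re, Complex.I_re, Complex.ofReal_im, Complex.I_im]
    simp [abs_of_nonneg hr.1]
    exact hr.2

lemma circleFn_periodic (u : ℂ → ℝ) (r : ℝ) : Function.Periodic (circleFn u r) (2 * π) := by
  intro θ
  unfold circleFn
  congr 1
  rw [Complex.ofReal_add, add_mul, Complex.exp_add]
  norm_num [Complex.exp_two_pi_mul_I]

/-- integral of |g| over any interval of length ≤ 2π is at most the integral over a period -/
lemma interval_abs_le_period {g : ℝ → ℝ} (hg : Continuous g)
    (hper : Function.Periodic g (2 * π)) {a b : ℝ} (hab : a ≤ b) (hlen : b - a ≤ 2 * π) :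
    ∫ x in a..b, |g x| ≤ ∫ x in (-π)..π, |g x| := by
  have habs : Continuous fun x => |g x| := hg.abs
  have hperabs : Function.Periodic (fun x => |g x|) (2 * π) := fun x => by simp [hper x]
  have h1 : ∫ x in a..b, |g x| ≤ ∫ x in a..(a + 2*π), |g x| := by
    rw [← intervalIntegral.integral_add_adjacent_intervals
      (habs.intervalIntegrable a b) (habs.intervalIntegrable b (a + 2*π))]
    have : 0 ≤ ∫ x in b..(a + 2*π), |g x| :=
      intervalIntegral.integral_nonneg (by linarith) (fun x _ => abs_nonneg _)
    linarith
  have h2 : ∫ x in a..(a + 2*π), |g x| = ∫ x in (-π)..(-π + 2*π), |g x| :=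
    hperabs.intervalIntegral_add_eq a (-π)
  rw [h2] at h1
  have : -π + 2*π = π := by ring
  rw [this] at h1
  exact h1


lemma mem_ball_circle {r : ℝ} (hr : r ∈ Set.Ico (0:ℝ) 1) (θ : ℝ) :
    (r : ℂ) * Complex.exp (θ * Complex.I) ∈ Metric.ball (0 : ℂ) 1 := by
  simp only [Metric.mem_ball, dist_zero_right, norm_mul, Complex.norm_real]
  rw [Complex.norm_exp]
  simp only [Complex.mul_re, Complex.ofReal_re, Complex.I_re, Complex.ofReal_im, Complex.I_im]
  simp [abs_of_nonneg hr.1]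
  exact hr.2

lemma part1 (u : ℂ → ℝ) (hu : HarmonicOnDisc u) :
    (∀ p : ℝ, 1 ≤ p →
        (∃ M : ℝ, ∀ r ∈ Set.Ico (0 : ℝ) 1, lpNorm p (circleFn u r) ≤ M) →
        ∃ M : ℝ, ∀ r ∈ Set.Ico (0 : ℝ) 1, alexNorm (circleFn u r) ≤ M) ∧
      ((∃ M : ℝ, ∀ z ∈ Metric.ball (0 : ℂ) 1, |u z| ≤ M) →
        ∃ M : ℝ, ∀ r ∈ Set.Ico (0 : ℝ) 1, alexNorm (circleFn u r) ≤ M) := by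
  have hucont : ContinuousOn u (Metric.ball 0 1) := hu.1.continuousOn
  constructor
  · rintro p hp ⟨M, hM⟩
    have hppos : 0 < p := lt_of_lt_of_le one_pos hp
    set C := max M 0 with hC
    refine ⟨2 * π + C ^ p, ?_⟩
    intro r hr
    set g := circleFn u r with hg
    have hgc : Continuous g := continuous_circleFn hucont hr
    have habsp : Continuous fun x => |g x| ^ p :=
      hgc.abs.rpow_const (fun x => Or.inr (le_of_lt hppos))
    apply alexNorm_le hgc
    · have : (0:ℝ) ≤ C ^ p := Real.rpow_nonneg (le_max_right M 0) p
      positivity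
    intro a b hab hlen
    have h0 : |∫ x in a..b, g x| ≤ ∫ x in a..b, |g x| :=
      intervalIntegral.abs_integral_le_integral_abs hab
    have h1 : ∫ x in a..b, |g x| ≤ ∫ x in (-π)..π, |g x| :=
      interval_abs_le_period hgc (circleFn_periodic u r) hab hlen
    have hpt : ∀ x, |g x| ≤ 1 + |g x| ^ p := by
      intro x
      rcases le_or_gt (|g x|) 1 with h | h
      · have : (0:ℝ) ≤ |g x| ^ p := Real.rpow_nonneg (abs_nonneg _) p
        linarith
      · have h2 : |g x| = |g x| ^ (1:ℝ) := (Real.rpow_one _).symm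
        have h3 : |g x| ^ (1:ℝ) ≤ |g x| ^ p :=
          Real.rpow_le_rpow_of_exponent_le (le_of_lt h) hp
        have h4 : |g x| ≤ |g x| ^ p := le_trans (le_of_eq h2) h3
        exact h4.trans (le_add_of_nonneg_left zero_le_one)
    have h2 : ∫ x in (-π)..π, |g x| ≤ ∫ x in (-π)..π, (1 + |g x| ^ p) := by
      apply intervalIntegral.integral_mono_on (by linarith [pi_pos])
        (hgc.abs.intervalIntegrable _ _)
        ((continuous_const.add habsp).intervalIntegrable _ _)
      intro x _; exact hpt x
    have h3 : ∫ x in (-π)..π, (1 + |g x| ^ p) = 2 * π + ∫ x in (-π)..π, |g x| ^ p := by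
      rw [intervalIntegral.integral_add (intervalIntegrable_const)
        (habsp.intervalIntegrable _ _)]
      simp [two_mul]
    have hXnn : (0:ℝ) ≤ ∫ x in (-π)..π, |g x| ^ p :=
      intervalIntegral.integral_nonneg (by linarith [pi_pos])
        (fun x _ => Real.rpow_nonneg (abs_nonneg _) p)
    have h4 : ∫ x in (-π)..π, |g x| ^ p ≤ C ^ p := by
      have hl : lpNorm p g ≤ C := le_trans (hM r hr) (le_max_left M 0)
      have hlnn : 0 ≤ lpNorm p g :=
        Real.rpow_nonneg hXnn _
      have h := Real.rpow_le_rpow hlnn hl (le_of_lt hppos)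
      rw [_root_.lpNorm, ← Real.rpow_mul hXnn, one_div, inv_mul_cancel₀ (ne_of_gt hppos),
        Real.rpow_one] at h
      exact h
    linarith
  · rintro ⟨M, hM⟩
    have hM0 : 0 ≤ M := le_trans (abs_nonneg _) (hM 0 (by simp))
    refine ⟨M * (2 * π), ?_⟩
    intro r hr
    set g := circleFn u r with hg
    have hgc : Continuous g := continuous_circleFn hucont hr
    apply alexNorm_le hgc (by positivity)
    intro a b hab hlen
    have hbd : ∀ x ∈ Set.uIoc a b, ‖g x‖ ≤ M := by
      intro x _
      exact hM _ (mem_ball_circle hr x)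
    calc |∫ x in a..b, g x| ≤ M * |b - a| :=
          intervalIntegral.norm_integral_le_of_norm_le_const hbd
      _ ≤ M * (2 * π) := by
          apply mul_le_mul_of_nonneg_left _ hM0
          rw [abs_of_nonneg (by linarith)]; linarith

/-- The example function: `f z = ∑ n z^(2^n)`. -/
def fP2 : ℂ → ℂ := fun z => ∑' n : ℕ, (n : ℂ) * z ^ (2 ^ n)
def uP2 : ℂ → ℝ := fun z => (fP2 z).re

lemma summable_aux {x : ℝ} (h0 : 0 ≤ x) (h1 : x < 1) :
    Summable (fun n : ℕ => (n:ℝ) * x ^ (2 ^ n)) := by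
  have hgeo : Summable (fun n : ℕ => (n:ℝ) ^ 1 * x ^ n) :=
    summable_pow_mul_geometric_of_norm_lt_one 1
      (by rwa [Real.norm_eq_abs, abs_of_nonneg h0])
  apply Summable.of_nonneg_of_le (fun n => by positivity) (fun n => ?_) hgeo
  rw [pow_one]
  apply mul_le_mul_of_nonneg_left _ (Nat.cast_nonneg n)
  exact pow_le_pow_of_le_one h0 (le_of_lt h1) (le_of_lt (Nat.lt_two_pow_self))

lemma summable_fP2 {z : ℂ} (hz : ‖z‖ < 1) :
    Summable (fun n : ℕ => (n : ℂ) * z ^ (2 ^ n)) := by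
  apply Summable.of_norm
  have : (fun n : ℕ => ‖(n : ℂ) * z ^ (2 ^ n)‖) = fun n : ℕ => (n:ℝ) * ‖z‖ ^ (2 ^ n) := by
    funext n
    rw [norm_mul, norm_pow]
    simp
  rw [this]
  exact summable_aux (norm_nonneg z) hz

lemma fP2_differentiableAt {z : ℂ} (hz : z ∈ Metric.ball (0:ℂ) 1) :
    DifferentiableAt ℂ fP2 z := by
  rw [Metric.mem_ball, dist_zero_right] at hz
  set ρ : ℝ := (1 + ‖z‖) / 2 with hρ
  have hρ0 : 0 ≤ ρ := by positivity
  have hρ1 : ρ < 1 := by rw [hρ]; linarith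
  have hzρ : ‖z‖ < ρ := by rw [hρ]; linarith
  have hdo : DifferentiableOn ℂ fP2 (Metric.ball 0 ρ) := by
    apply Complex.differentiableOn_tsum_of_summable_norm (summable_aux hρ0 hρ1)
      (fun i => ((differentiable_const ((i : ℂ))).mul (differentiable_pow _)).differentiableOn)
      Metric.isOpen_ball
    intro i w hw
    rw [Metric.mem_ball, dist_zero_right] at hw
    rw [Pi.mul_apply, norm_mul, norm_pow]
    simp only [Complex.norm_natCast]
    exact mul_le_mul_of_nonneg_left
      (pow_le_pow_left₀ (norm_nonneg w) (le_of_lt hw) _) (Nat.cast_nonneg i)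
  exact hdo.differentiableAt (Metric.isOpen_ball.mem_nhds (by simpa [dist_zero_right] using hzρ))

lemma fP2_analytic : AnalyticOnNhd ℂ fP2 (Metric.ball 0 1) :=
  DifferentiableOn.analyticOnNhd
    (fun z hz => (fP2_differentiableAt hz).differentiableWithinAt) Metric.isOpen_ball

lemma uP2_contDiffOn : ContDiffOn ℝ 2 uP2 (Metric.ball 0 1) := by
  have h1 : ContDiffOn ℂ 2 fP2 (Metric.ball 0 1) :=
    fP2_analytic.contDiffOn Metric.isOpen_ball.uniqueDiffOn
  have h2 : ContDiffOn ℝ 2 fP2 (Metric.ball 0 1) := h1.restrict_scalars ℝ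
  exact Complex.reCLM.contDiff.comp_contDiffOn h2

/-- `fderiv` of `w ↦ (F w * c).re` in direction `v`. -/
lemma fderiv_re_mul {F : ℂ → ℂ} {z : ℂ} (hF : DifferentiableAt ℂ F z) (c v : ℂ) :
    fderiv ℝ (fun w => (F w * c).re) z v = (deriv F z * v * c).re := by
  set L : ℂ →L[ℝ] ℝ := Complex.reCLM.comp (c • (ContinuousLinearMap.id ℝ ℂ)) with hL
  have h1 : HasFDerivAt F
      ((ContinuousLinearMap.smulRight (1 : ℂ →L[ℂ] ℂ) (deriv F z)).restrictScalars ℝ) z :=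
    (hF.hasDerivAt.hasFDerivAt).restrictScalars ℝ
  have h2 : HasFDerivAt (fun w => L (F w))
      (L.comp ((ContinuousLinearMap.smulRight (1 : ℂ →L[ℂ] ℂ) (deriv F z)).restrictScalars ℝ))
      z := L.hasFDerivAt.comp z h1
  have h3 : (fun w => L (F w)) = (fun w => (F w * c).re) := by
    funext w
    simp only [hL, ContinuousLinearMap.comp_apply, ContinuousLinearMap.smul_apply,
      ContinuousLinearMap.id_apply, Complex.reCLM_apply, smul_eq_mul]
    ring_nf
  rw [h3] at h2
  rw [h2.fderiv]
  have hv : (ContinuousLinearMap.restrictScalars ℝ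
      (ContinuousLinearMap.smulRight (1 : ℂ →L[ℂ] ℂ) (deriv F z))) v = v * deriv F z := by
    simp [ContinuousLinearMap.coe_restrictScalars', smul_eq_mul]
  rw [ContinuousLinearMap.comp_apply, hv]
  simp only [hL, ContinuousLinearMap.comp_apply, ContinuousLinearMap.smul_apply,
    ContinuousLinearMap.id_apply, Complex.reCLM_apply, smul_eq_mul]
  congr 1
  ring

lemma fderiv_re {F : ℂ → ℂ} {z : ℂ} (hF : DifferentiableAt ℂ F z) (v : ℂ) :
    fderiv ℝ (fun w => (F w).re) z v = (deriv F z * v).re := by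
  have h := fderiv_re_mul hF 1 v
  simp only [mul_one] at h
  exact h

lemma uP2_laplace : ∀ z ∈ Metric.ball (0 : ℂ) 1,
    fderiv ℝ (fun w => fderiv ℝ uP2 w 1) z 1
      + fderiv ℝ (fun w => fderiv ℝ uP2 w Complex.I) z Complex.I = 0 := by
  intro z hz
  have hball : IsOpen (Metric.ball (0:ℂ) 1) := Metric.isOpen_ball
  have hfd' : ∀ w ∈ Metric.ball (0:ℂ) 1, DifferentiableAt ℂ (deriv fP2) w :=
    fun w hw => (fP2_analytic.deriv w hw).differentiableAt
  have E1 : ∀ v : ℂ, ∀ w ∈ Metric.ball (0:ℂ) 1,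
      fderiv ℝ uP2 w v = (deriv fP2 w * v).re :=
    fun v w hw => fderiv_re (fP2_differentiableAt hw) v
  -- first term
  have hA : fderiv ℝ (fun w => fderiv ℝ uP2 w 1) z 1
      = (deriv (deriv fP2) z * 1 * 1).re := by
    have heq : (fun w => fderiv ℝ uP2 w 1) =ᶠ[nhds z] (fun w => (deriv fP2 w * 1).re) :=
      Filter.eventuallyEq_of_mem (hball.mem_nhds hz) (fun w hw => E1 1 w hw)
    rw [heq.fderiv_eq]
    exact fderiv_re_mul (hfd' z hz) 1 1
  have hB : fderiv ℝ (fun w => fderiv ℝ uP2 w Complex.I) z Complex.I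
      = (deriv (deriv fP2) z * Complex.I * Complex.I).re := by
    have heq : (fun w => fderiv ℝ uP2 w Complex.I)
        =ᶠ[nhds z] (fun w => (deriv fP2 w * Complex.I).re) :=
      Filter.eventuallyEq_of_mem (hball.mem_nhds hz) (fun w hw => E1 Complex.I w hw)
    rw [heq.fderiv_eq]
    exact fderiv_re_mul (hfd' z hz) Complex.I Complex.I
  rw [hA, hB]
  have : deriv (deriv fP2) z * Complex.I * Complex.I = -(deriv (deriv fP2) z * 1 * 1) := by
    rw [mul_assoc, Complex.I_mul_I]; ring
  rw [this, Complex.neg_re]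
  ring


lemma circleFn_uP2 {r : ℝ} (hr : r ∈ Set.Ico (0:ℝ) 1) (θ : ℝ) :
    circleFn uP2 r θ = ∑' n : ℕ, (n:ℝ) * r ^ (2^n) * Real.cos (((2^n : ℕ):ℝ) * θ) := by
  have hz : ‖(r:ℂ) * Complex.exp (θ * Complex.I)‖ < 1 := by
    have := mem_ball_circle hr θ
    rwa [Metric.mem_ball, dist_zero_right] at this
  have hsum := summable_fP2 hz
  unfold circleFn uP2 fP2
  rw [← Complex.reCLM_apply, ContinuousLinearMap.map_tsum _ hsum]
  congr 1
  funext n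
  rw [mul_pow, ← Complex.exp_nat_mul]
  rw [show ((2^n : ℕ) : ℂ) * (↑θ * Complex.I) = ↑(((2^n:ℕ):ℝ) * θ) * Complex.I by
    push_cast; ring]
  rw [show ((r:ℂ))^(2^n) = ((r^(2^n) : ℝ) : ℂ) by push_cast; ring]
  rw [show ((n:ℕ):ℂ) = (((n:ℕ):ℝ):ℂ) by push_cast; ring]
  rw [← mul_assoc, ← Complex.ofReal_mul]
  rw [Complex.reCLM_apply, Complex.re_ofReal_mul, Complex.exp_ofReal_mul_I_re]

def VP2 (r θ : ℝ) : ℝ := ∑' n : ℕ, ((n:ℝ) / 2^n) * r^(2^n) * Real.sin (((2^n : ℕ):ℝ) * θ)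

lemma hasDerivAt_VP2 {r : ℝ} (hr : r ∈ Set.Ico (0:ℝ) 1) (θ : ℝ) :
    HasDerivAt (VP2 r) (∑' n : ℕ, (n:ℝ) * r^(2^n) * Real.cos (((2^n:ℕ):ℝ) * θ)) θ := by
  have hg : ∀ (n : ℕ) (y : ℝ), HasDerivAt (fun y => ((n:ℝ) / 2^n) * r^(2^n) * Real.sin (((2^n : ℕ):ℝ) * y))
      ((n:ℝ) * r^(2^n) * Real.cos (((2^n:ℕ):ℝ) * y)) y := by
    intro n y
    set c : ℝ := ((2^n : ℕ):ℝ) with hc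
    have hc' : HasDerivAt (fun x : ℝ => c * x) c y := by
      simpa using (hasDerivAt_id y).const_mul c
    have h := ((Real.hasDerivAt_sin (c*y)).comp y hc').const_mul ((n:ℝ) / 2^n * r^(2^n))
    have he : (n:ℝ) / 2^n * r^(2^n) * (Real.cos (c*y) * c) = (n:ℝ) * r^(2^n) * Real.cos (c*y) := by
      have h2 : c = (2:ℝ)^n := by rw [hc]; push_cast; ring
      rw [h2]
      have h3 : (2:ℝ)^n ≠ 0 := by positivity
      field_simp
    rw [he] at h
    exact h
  have hg' : ∀ (n : ℕ) (y : ℝ), ‖(n:ℝ) * r^(2^n) * Real.cos (((2^n:ℕ):ℝ) * y)‖ ≤ (n:ℝ) * r^(2^n) := by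
    intro n y
    have hA : (0:ℝ) ≤ (n:ℝ) * r^(2^n) := mul_nonneg (Nat.cast_nonneg n) (pow_nonneg hr.1 _)
    rw [Real.norm_eq_abs, abs_mul, abs_of_nonneg hA]
    calc (n:ℝ) * r^(2^n) * |Real.cos (((2^n:ℕ):ℝ) * y)|
        ≤ (n:ℝ) * r^(2^n) * 1 := mul_le_mul_of_nonneg_left (Real.abs_cos_le_one _) hA
      _ = (n:ℝ) * r^(2^n) := mul_one _
  have hg0 : Summable (fun n : ℕ => ((n:ℝ) / 2^n) * r^(2^n) * Real.sin (((2^n : ℕ):ℝ) * 0)) := by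
    simp only [mul_zero, Real.sin_zero]
    exact summable_zero
  exact hasDerivAt_tsum (summable_aux hr.1 hr.2) hg hg' hg0 θ

def BP2 : ℝ := ∑' n : ℕ, (n:ℝ) * (2⁻¹)^n

lemma BP2_summable : Summable (fun n : ℕ => (n:ℝ) * (2⁻¹)^n) := by
  have h := summable_pow_mul_geometric_of_norm_lt_one (R := ℝ) 1
    (r := (2⁻¹:ℝ)) (by rw [Real.norm_eq_abs, abs_of_nonneg (by norm_num : (0:ℝ) ≤ 2⁻¹)]; norm_num)
  simpa using h

lemma VP2_term_bound {r : ℝ} (hr : r ∈ Set.Ico (0:ℝ) 1) (θ : ℝ) (n : ℕ) :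
    ‖((n:ℝ) / 2^n) * r^(2^n) * Real.sin (((2^n : ℕ):ℝ) * θ)‖ ≤ (n:ℝ) * (2⁻¹)^n := by
  rw [Real.norm_eq_abs, abs_mul, abs_mul]
  have h2 : (0:ℝ) < 2^n := by positivity
  have e1 : |(n:ℝ) / 2^n| = (n:ℝ) * (2⁻¹)^n := by
    rw [abs_of_nonneg (by positivity), div_eq_mul_inv, inv_pow]
  rw [e1]
  have e2 : |r^(2^n)| ≤ 1 := by
    rw [abs_of_nonneg (pow_nonneg hr.1 _)]
    exact pow_le_one₀ hr.1 (le_of_lt hr.2)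
  have e3 : |Real.sin (((2^n : ℕ):ℝ) * θ)| ≤ 1 := Real.abs_sin_le_one _
  have hnn : (0:ℝ) ≤ (n:ℝ) * (2⁻¹)^n := by positivity
  calc (n:ℝ) * (2⁻¹)^n * |r^(2^n)| * |Real.sin (((2^n : ℕ):ℝ) * θ)|
      ≤ (n:ℝ) * (2⁻¹)^n * |Real.sin (((2^n : ℕ):ℝ) * θ)| :=
        mul_le_mul_of_nonneg_right (mul_le_of_le_one_right hnn e2) (abs_nonneg _)
    _ ≤ (n:ℝ) * (2⁻¹)^n := mul_le_of_le_one_right hnn e3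

lemma VP2_bound {r : ℝ} (hr : r ∈ Set.Ico (0:ℝ) 1) (θ : ℝ) : |VP2 r θ| ≤ BP2 := by
  have hsumn : Summable (fun n : ℕ => ‖((n:ℝ) / 2^n) * r^(2^n) * Real.sin (((2^n : ℕ):ℝ) * θ)‖) :=
    Summable.of_nonneg_of_le (fun n => norm_nonneg _) (VP2_term_bound hr θ) BP2_summable
  calc |VP2 r θ| ≤ ∑' n : ℕ, ‖((n:ℝ) / 2^n) * r^(2^n) * Real.sin (((2^n : ℕ):ℝ) * θ)‖ := by
        rw [← Real.norm_eq_abs]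
        exact norm_tsum_le_tsum_norm hsumn
    _ ≤ BP2 := Summable.tsum_le_tsum (VP2_term_bound hr θ) hsumn BP2_summable

lemma BP2_nonneg : 0 ≤ BP2 := tsum_nonneg (fun n => by positivity)

lemma integral_circleFn_uP2 {r : ℝ} (hr : r ∈ Set.Ico (0:ℝ) 1) {a b : ℝ} :
    ∫ θ in a..b, circleFn uP2 r θ = VP2 r b - VP2 r a := by
  have hcont : Continuous (circleFn uP2 r) :=
    continuous_circleFn (uP2_contDiffOn.continuousOn) hr
  apply intervalIntegral.integral_eq_sub_of_hasDerivAt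
  · intro θ _
    rw [show circleFn uP2 r θ = ∑' n : ℕ, (n:ℝ) * r^(2^n) * Real.cos (((2^n:ℕ):ℝ) * θ) from
      circleFn_uP2 hr θ]
    exact hasDerivAt_VP2 hr θ
  · exact hcont.intervalIntegrable _ _

lemma integral_cos_mul {c : ℝ} (hc : c ≠ 0) :
    ∫ θ in (-π)..π, Real.cos (c*θ) = 2 * Real.sin (c*π) / c := by
  have h := intervalIntegral.integral_comp_mul_left (a := -π) (b := π) (fun x => Real.cos x) hc
  rw [h, integral_cos, smul_eq_mul]
  rw [mul_neg, Real.sin_neg]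
  field_simp
  ring

lemma integral_cos_int {m : ℤ} (hm : m ≠ 0) :
    ∫ θ in (-π)..π, Real.cos ((m:ℝ)*θ) = 0 := by
  rw [integral_cos_mul (by exact_mod_cast hm : ((m:ℝ)) ≠ 0), Real.sin_int_mul_pi]
  simp

lemma orth {m k : ℕ} (hm : 1 ≤ m) (hk : 1 ≤ k) :
    (∫ θ in (-π)..π, Real.cos ((m:ℝ)*θ) * Real.cos ((k:ℝ)*θ)) = if m = k then π else 0 := by
  have hid : ∀ θ : ℝ, Real.cos ((m:ℝ)*θ) * Real.cos ((k:ℝ)*θ)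
      = (Real.cos (((m:ℝ)+k)*θ) + Real.cos (((m:ℝ)-k)*θ)) / 2 := by
    intro θ; rw [add_mul, sub_mul, Real.cos_add, Real.cos_sub]; ring
  rw [intervalIntegral.integral_congr (g := fun θ =>
      (Real.cos (((m:ℝ)+k)*θ) + Real.cos (((m:ℝ)-k)*θ)) / 2) (fun θ _ => hid θ)]
  have c1 : Continuous fun θ : ℝ => Real.cos (((m:ℝ)+k)*θ) :=
    Real.continuous_cos.comp (continuous_const.mul continuous_id)
  have c2 : Continuous fun θ : ℝ => Real.cos (((m:ℝ)-k)*θ) :=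
    Real.continuous_cos.comp (continuous_const.mul continuous_id)
  rw [intervalIntegral.integral_div,
    intervalIntegral.integral_add (c1.intervalIntegrable _ _) (c2.intervalIntegrable _ _)]
  have h1 : ∫ θ in (-π)..π, Real.cos (((m:ℝ)+k)*θ) = 0 := by
    have e : ((m:ℝ)+k) = (((m:ℤ) + k : ℤ):ℝ) := by push_cast; ring
    rw [e]; exact integral_cos_int (by omega)
  rcases eq_or_ne m k with he | hne
  · subst he
    rw [if_pos rfl, h1]
    have e : ((m:ℝ) - m) = 0 := by ring
    rw [e]
    simp only [zero_mul, Real.cos_zero]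
    rw [integral_one]
    ring
  · rw [if_neg hne, h1]
    have e : ((m:ℝ)-k) = (((m:ℤ) - k : ℤ):ℝ) := by push_cast; ring
    rw [e, integral_cos_int (by omega)]
    ring

lemma coeff_uP2 {r : ℝ} (hr : r ∈ Set.Ico (0:ℝ) 1) (N : ℕ) :
    ∫ θ in (-π)..π, circleFn uP2 r θ * Real.cos (((2^N:ℕ):ℝ)*θ)
      = π * ((N:ℝ) * r^(2^N)) := by
  have hle : (-π:ℝ) ≤ π := by linarith [pi_pos]
  set F : ℕ → ℝ → ℝ := fun n θ =>
    (n:ℝ) * r^(2^n) * Real.cos (((2^n:ℕ):ℝ)*θ) * Real.cos (((2^N:ℕ):ℝ)*θ) with hF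
  have hcos : ∀ m : ℕ, Continuous fun θ : ℝ => Real.cos (((2^m:ℕ):ℝ)*θ) :=
    fun m => Real.continuous_cos.comp (continuous_const.mul continuous_id)
  have hFc : ∀ n, Continuous (F n) :=
    fun n => (continuous_const.mul (hcos n)).mul (hcos N)
  have hrw : ∀ θ : ℝ, circleFn uP2 r θ * Real.cos (((2^N:ℕ):ℝ)*θ) = ∑' n, F n θ := by
    intro θ
    rw [circleFn_uP2 hr θ]
    exact (tsum_mul_right).symm
  rw [intervalIntegral.integral_congr (g := fun θ => ∑' n, F n θ) (fun θ _ => hrw θ)]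
  rw [intervalIntegral.integral_of_le hle]
  have hint : ∀ n, Integrable (F n) (volume.restrict (Ioc (-π) π)) :=
    fun n => (hFc n).integrableOn_Ioc
  have hbd : ∀ n θ, ‖F n θ‖ ≤ (n:ℝ) * r^(2^n) := by
    intro n θ
    have hA : (0:ℝ) ≤ (n:ℝ) * r^(2^n) := mul_nonneg (Nat.cast_nonneg n) (pow_nonneg hr.1 _)
    rw [hF]
    simp only [Real.norm_eq_abs, abs_mul, abs_of_nonneg hA]
    calc (n:ℝ) * r^(2^n) * |Real.cos (((2^n:ℕ):ℝ)*θ)| * |Real.cos (((2^N:ℕ):ℝ)*θ)|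
        ≤ (n:ℝ) * r^(2^n) * |Real.cos (((2^N:ℕ):ℝ)*θ)| :=
          mul_le_mul_of_nonneg_right
            (mul_le_of_le_one_right hA (Real.abs_cos_le_one _)) (abs_nonneg _)
      _ ≤ (n:ℝ) * r^(2^n) := mul_le_of_le_one_right hA (Real.abs_cos_le_one _)
  have hnorm : Summable (fun n => ∫ θ in Ioc (-π) π, ‖F n θ‖) := by
    apply Summable.of_nonneg_of_le (fun n => integral_nonneg (fun θ => norm_nonneg _))
      (fun n => ?_) ((summable_aux hr.1 hr.2).mul_right (2*π))
    calc ∫ θ in Ioc (-π) π, ‖F n θ‖ ≤ ∫ _ in Ioc (-π) π, (n:ℝ)*r^(2^n) := by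
          apply setIntegral_mono_on ((hFc n).norm.integrableOn_Ioc)
            (integrableOn_const measure_Ioc_lt_top.ne) measurableSet_Ioc
          intro θ _; exact hbd n θ
      _ = (n:ℝ)*r^(2^n) * (2*π) := by
          rw [setIntegral_const, Real.volume_real_Ioc_of_le (by linarith : (-π:ℝ) ≤ π), smul_eq_mul]
          ring
  rw [← MeasureTheory.integral_tsum_of_summable_integral_norm hint hnorm]
  have hval : ∀ n, (∫ θ in Ioc (-π) π, F n θ)
      = (n:ℝ)*r^(2^n) * (if 2^n = 2^N then π else 0) := by
    intro n
    rw [← intervalIntegral.integral_of_le hle]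
    have e : ∀ θ, F n θ = ((n:ℝ)*r^(2^n)) *
        (Real.cos (((2^n:ℕ):ℝ)*θ) * Real.cos (((2^N:ℕ):ℝ)*θ)) := by
      intro θ; rw [hF]; ring
    rw [intervalIntegral.integral_congr (fun θ _ => e θ),
      intervalIntegral.integral_const_mul,
      orth (Nat.one_le_two_pow) (Nat.one_le_two_pow)]
  calc ∑' n, ∫ θ in Ioc (-π) π, F n θ
      = ∑' n : ℕ, (n:ℝ)*r^(2^n) * (if 2^n = 2^N then π else 0) := tsum_congr hval
    _ = π * ((N:ℝ) * r^(2^N)) := by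
        rw [tsum_eq_single N (fun n hn => ?_)]
        · rw [if_pos rfl]; ring
        · rw [if_neg, mul_zero]
          exact fun h => hn (Nat.pow_right_injective (le_refl 2) h)


lemma lpNorm_one (g : ℝ → ℝ) : lpNorm 1 g = ∫ θ in (-π)..π, |g θ| := by
  unfold _root_.lpNorm
  norm_num [Real.rpow_one]

lemma lp1_unbounded :
    ¬ ∃ M : ℝ, ∀ r ∈ Set.Ico (0 : ℝ) 1, lpNorm 1 (circleFn uP2 r) ≤ M := by
  rintro ⟨M, hM⟩
  obtain ⟨K, hK⟩ := exists_nat_gt (2 * M / π)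
  set N : ℕ := K + 1 with hN
  set r : ℝ := (2⁻¹ : ℝ) ^ (((2:ℝ)^N)⁻¹) with hr'
  have h2N : (0:ℝ) < (2:ℝ)^N := by positivity
  have hr : r ∈ Set.Ico (0:ℝ) 1 := by
    constructor
    · exact Real.rpow_nonneg (by norm_num) _
    · exact Real.rpow_lt_one (by norm_num) (by norm_num) (by positivity)
  have hrpow : r ^ (2^N : ℕ) = 2⁻¹ := by
    rw [hr', ← Real.rpow_natCast ((2⁻¹:ℝ) ^ (((2:ℝ)^N)⁻¹)) (2^N),
      ← Real.rpow_mul (by norm_num : (0:ℝ) ≤ 2⁻¹)]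
    rw [show ((2^N : ℕ):ℝ) = (2:ℝ)^N by push_cast; ring]
    rw [inv_mul_cancel₀ (ne_of_gt h2N), Real.rpow_one]
  have hcont : Continuous (circleFn uP2 r) :=
    continuous_circleFn (uP2_contDiffOn.continuousOn) hr
  have hle : (-π:ℝ) ≤ π := by linarith [pi_pos]
  have key : π * ((N:ℝ) * 2⁻¹) ≤ lpNorm 1 (circleFn uP2 r) := by
    have h1 : π * ((N:ℝ) * 2⁻¹) = ∫ θ in (-π)..π,
        circleFn uP2 r θ * Real.cos (((2^N:ℕ):ℝ)*θ) := by
      rw [coeff_uP2 hr N, hrpow]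
    rw [lpNorm_one]
    rw [h1]
    have hcos : Continuous fun θ : ℝ => Real.cos (((2^N:ℕ):ℝ)*θ) :=
      Real.continuous_cos.comp (continuous_const.mul continuous_id)
    calc ∫ θ in (-π)..π, circleFn uP2 r θ * Real.cos (((2^N:ℕ):ℝ)*θ)
        ≤ |∫ θ in (-π)..π, circleFn uP2 r θ * Real.cos (((2^N:ℕ):ℝ)*θ)| := le_abs_self _
      _ ≤ ∫ θ in (-π)..π, |circleFn uP2 r θ * Real.cos (((2^N:ℕ):ℝ)*θ)| :=
          intervalIntegral.abs_integral_le_integral_abs hle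
      _ ≤ ∫ θ in (-π)..π, |circleFn uP2 r θ| := by
          apply intervalIntegral.integral_mono_on hle
            ((hcont.mul hcos).abs.intervalIntegrable _ _)
            (hcont.abs.intervalIntegrable _ _)
          intro θ _
          rw [Pi.mul_apply, abs_mul]
          exact mul_le_of_le_one_right (abs_nonneg _) (Real.abs_cos_le_one _)
  have hcontr := le_trans key (hM r hr)
  have hKN : 2 * M / π < (N:ℝ) := by
    have : (K:ℝ) < N := by exact_mod_cast Nat.lt_succ_self K
    linarith
  rw [div_lt_iff₀ pi_pos] at hKN
  nlinarith [pi_pos]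

/-- for each `1 ≤ p ≤ ∞`, `h^p ⊊ h^{HK}`: a harmonic function on the disc
with uniformly bounded `L^p` norms on circles (or bounded, for `p = ∞`) has uniformly
bounded Alexiewicz norms on circles; and there is a harmonic function with uniformly
bounded Alexiewicz norms whose `L¹` norms on circles are unbounded. -/
theorem hp_strict_subset_hHK :
    (∀ u : ℂ → ℝ, HarmonicOnDisc u →
      (∀ p : ℝ, 1 ≤ p →
        (∃ M : ℝ, ∀ r ∈ Set.Ico (0 : ℝ) 1, lpNorm p (circleFn u r) ≤ M) →
        ∃ M : ℝ, ∀ r ∈ Set.Ico (0 : ℝ) 1, alexNorm (circleFn u r) ≤ M) ∧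
      ((∃ M : ℝ, ∀ z ∈ Metric.ball (0 : ℂ) 1, |u z| ≤ M) →
        ∃ M : ℝ, ∀ r ∈ Set.Ico (0 : ℝ) 1, alexNorm (circleFn u r) ≤ M)) ∧
    (∃ u : ℂ → ℝ, HarmonicOnDisc u ∧
      (∃ M : ℝ, ∀ r ∈ Set.Ico (0 : ℝ) 1, alexNorm (circleFn u r) ≤ M) ∧
      ¬ ∃ M : ℝ, ∀ r ∈ Set.Ico (0 : ℝ) 1, lpNorm 1 (circleFn u r) ≤ M) := by
  refine ⟨fun u hu => part1 u hu, ?_⟩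
  refine ⟨uP2, ⟨uP2_contDiffOn, uP2_laplace⟩, ?_, lp1_unbounded⟩
  refine ⟨2 * BP2, fun r hr => ?_⟩
  apply alexNorm_le (continuous_circleFn uP2_contDiffOn.continuousOn hr)
    (by linarith [BP2_nonneg])
  intro a b hab hlen
  rw [integral_circleFn_uP2 hr]
  have h1 := abs_add_le (VP2 r b) (-(VP2 r a))
  rw [abs_neg, ← sub_eq_add_neg] at h1
  linarith [VP2_bound hr b, VP2_bound hr a]
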